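/- Let F be a set of functions X → [0,1], f⋆ : X → [0,1], ζ > 0, and suppose d := ĕ_{f⋆}(F, ζ) is finite with d ≥ 1. Then for every finite sequence z_1, …, z_τ in X with τ ≥ 1, setting K := ⌊(τ − 1)/d⌋, there exists an index j ∈ {1, …, τ} and K pairwise disjoint subsequences of (z_1, …, z_{j−1}) such that z_j is ζ-dependent on each of these K subsequences. -/

import Mathlib

open scoped ENNReal

/-- `x` is `ζ`-dependent (with respect to `F` and `f⋆`) on the finite subsequence of the
sequence `z` indexed by `S`: every `f ∈ F` with `Σ_{i ∈ S} (f (z i) - f⋆ (z i))² ≤ ζ²`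
satisfies `|f x - f⋆ x| ≤ ζ`.  (Dependence only involves the multiset of elements of a
subsequence, so indexing subsequences by finite index sets is equivalent to the list
formulation.) -/
def ZetaDep {X : Type*} (F : Set (X → ℝ)) (fstar : X → ℝ) (ζ : ℝ)
    (z : ℕ → X) (S : Finset ℕ) (x : X) : Prop :=
  ∀ f ∈ F, (∑ i ∈ S, (f (z i) - fstar (z i)) ^ 2 ≤ ζ ^ 2) → |f x - fstar x| ≤ ζ

/-- `ĕ_{f⋆}(F, ζ)`: the length of the longest sequence each of whose elements is
`ζ`-independent of all its predecessors (valued in `ℝ≥0∞`). -/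
noncomputable def eluderLenAt {X : Type*} (F : Set (X → ℝ)) (fstar : X → ℝ)
    (ζ : ℝ) : ℝ≥0∞ :=
  ⨆ z : ℕ → X, ⨆ m : ℕ,
    ⨆ _ : ∀ i < m, ¬ ZetaDep F fstar ζ z (Finset.range i) (z i), (m : ℝ≥0∞)

/-- congruence for `ZetaDep` -/
lemma zetaDep_congr {X : Type*} {F : Set (X → ℝ)} {fstar : X → ℝ} {ζ : ℝ}
    {w w' : ℕ → X} {S : Finset ℕ} {x x' : X}
    (hw : ∀ j ∈ S, w j = w' j) (hx : x = x') :
    ZetaDep F fstar ζ w S x ↔ ZetaDep F fstar ζ w' S x' := by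
  subst hx
  unfold ZetaDep
  have hs : ∀ f : X → ℝ,
      ∑ i ∈ S, (f (w i) - fstar (w i)) ^ 2 = ∑ i ∈ S, (f (w' i) - fstar (w' i)) ^ 2 :=
    fun f => Finset.sum_congr rfl fun j hj => by rw [hw j hj]
  constructor <;> intro h f hf hsum <;> apply h f hf
  · rw [hs]; exact hsum
  · rw [← hs]; exact hsum

lemma sum_range_getD_eq (L : List ℕ) (g : ℕ → ℝ) :
    ∑ j ∈ Finset.range L.length, g (L.getD j 0) = (L.map g).sum := by
  induction L with
  | nil => simp
  | cons a L ih =>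
    rw [List.length_cons, Finset.sum_range_succ']
    simp only [List.getD_cons_succ, List.getD_cons_zero, ih, List.map_cons, List.sum_cons]
    ring

/-- Pigeonhole claim in the eluder-dimension width-counting lemma: if
`d = ĕ_{f⋆}(F, ζ)` is finite with `d ≥ 1`, then for every finite sequence
`z_1, …, z_τ` (τ ≥ 1), setting `K = ⌊(τ - 1)/d⌋`, there is an index `j ∈ {1, …, τ}` and
`K` pairwise disjoint subsequences of `(z_1, …, z_{j-1})` on each of which `z_j` is
`ζ`-dependent. -/
theorem stmt_13 {X : Type*} (F : Set (X → ℝ))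
    (hFb : ∀ f ∈ F, ∀ v, f v ∈ Set.Icc (0 : ℝ) 1)
    (fstar : X → ℝ) (ζ : ℝ) (hζ : 0 < ζ)
    (d : ℕ) (hd : 1 ≤ d) (hlen : eluderLenAt F fstar ζ = (d : ℝ≥0∞))
    (z : ℕ → X) (τ : ℕ) (hτ : 1 ≤ τ) :
    ∃ j, 1 ≤ j ∧ j ≤ τ ∧ ∃ S : Fin ((τ - 1) / d) → Finset ℕ,
      (∀ k, ∀ i ∈ S k, 1 ≤ i ∧ i < j)
      ∧ (∀ k k', k ≠ k' → Disjoint (S k) (S k'))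
      ∧ (∀ k, ZetaDep F fstar ζ z (S k) (z j)) := by
  classical
  by_contra hgoal
  set K := (τ - 1) / d with hK
  -- any independent chain has length at most d
  have key : ∀ (w : ℕ → X) (m : ℕ),
      (∀ i < m, ¬ ZetaDep F fstar ζ w (Finset.range i) (w i)) → m ≤ d := by
    intro w m h
    have h1 : (m : ℝ≥0∞) ≤ eluderLenAt F fstar ζ := by
      refine le_iSup_of_le w (le_iSup_of_le m ?_)
      exact le_iSup (fun _ : (∀ i < m, ¬ ZetaDep F fstar ζ w (Finset.range i) (w i)) =>
        (m : ℝ≥0∞)) h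
    rw [hlen] at h1
    exact_mod_cast h1
  -- build disjoint buckets greedily
  have main : ∀ n, n ≤ τ → ∃ B : Fin K → List ℕ,
      (∀ k, ∀ i ∈ B k, 1 ≤ i ∧ i ≤ n)
      ∧ (∀ k, (B k).Nodup)
      ∧ (∀ k k', k ≠ k' → ∀ i, i ∈ B k → i ∉ B k')
      ∧ (∑ k, (B k).length) = n
      ∧ (∀ k, ∀ i < (B k).length, ¬ ZetaDep F fstar ζ
          (fun j => z ((B k).getD j 0)) (Finset.range i) (z ((B k).getD i 0))) := by
    intro n
    induction n with
    | zero =>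
      intro _
      exact ⟨fun _ => [], by simp, by simp, by simp, by simp, by simp⟩
    | succ n ih =>
      intro hn1
      obtain ⟨B, hB1, hB2, hB3, hB4, hB5⟩ := ih (by omega)
      by_cases hall : ∀ k : Fin K, ZetaDep F fstar ζ z (B k).toFinset (z (n + 1))
      · exfalso
        refine hgoal ⟨n + 1, by omega, hn1, fun k => (B k).toFinset, ?_, ?_, hall⟩
        · intro k i hi
          have := hB1 k i (List.mem_toFinset.mp hi)
          omega
        · intro k k' hkk'
          rw [Finset.disjoint_left]
          intro i hi hi'
          exact hB3 k k' hkk' i (List.mem_toFinset.mp hi) (List.mem_toFinset.mp hi')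
      · push_neg at hall
        obtain ⟨k0, hk0⟩ := hall
        set t := n + 1 with ht
        have htnot : ∀ k : Fin K, t ∉ B k := by
          intro k hmem
          have := hB1 k t hmem
          omega
        refine ⟨Function.update B k0 (B k0 ++ [t]), ?_, ?_, ?_, ?_, ?_⟩
        · intro k i hi
          rcases eq_or_ne k k0 with rfl | hk
          · rw [Function.update_self] at hi
            rcases List.mem_append.mp hi with h | h
            · have := hB1 k i h; omega
            · simp at h; omega
          · rw [Function.update_of_ne hk] at hi
            have := hB1 k i hi; omega
        · intro k
          rcases eq_or_ne k k0 with rfl | hk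
          · rw [Function.update_self]
            refine List.Nodup.append (hB2 k) (List.nodup_singleton t) ?_
            intro a ha hb
            simp at hb; subst hb
            exact htnot k ha
          · rw [Function.update_of_ne hk]; exact hB2 k
        · intro k k' hkk' i hi hi'
          have hmem : ∀ k'' : Fin K, i ∈ Function.update B k0 (B k0 ++ [t]) k'' →
              i ∈ B k'' ∨ (k'' = k0 ∧ i = t) := by
            intro k'' h
            rcases eq_or_ne k'' k0 with rfl | hk''
            · rw [Function.update_self] at h
              rcases List.mem_append.mp h with h | h
              · exact Or.inl h
              · simp at h; exact Or.inr ⟨rfl, h⟩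
            · rw [Function.update_of_ne hk''] at h; exact Or.inl h
          rcases hmem k hi with h1 | ⟨rfl, rfl⟩
          · rcases hmem k' hi' with h2 | ⟨rfl, rfl⟩
            · exact hB3 k k' hkk' i h1 h2
            · exact htnot k h1
          · rcases hmem k' hi' with h2 | ⟨h2, _⟩
            · exact htnot k' h2
            · exact hkk' h2.symm
        · have hlen' : ∀ k : Fin K, (Function.update B k0 (B k0 ++ [t]) k).length =
              (B k).length + (if k = k0 then 1 else 0) := by
            intro k
            rcases eq_or_ne k k0 with rfl | hk
            · rw [Function.update_self]; simp
            · rw [Function.update_of_ne hk]; simp [hk]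
          simp only [hlen', Finset.sum_add_distrib, hB4, Finset.sum_ite_eq' Finset.univ k0]
          simp [ht]
        · intro k i hi
          rcases eq_or_ne k k0 with rfl | hk
          · rw [Function.update_self] at hi ⊢
            rw [List.length_append, List.length_singleton] at hi
            have hgd : ∀ j, j < (B k).length → (B k ++ [t]).getD j 0 = (B k).getD j 0 :=
              fun j hj => List.getD_append _ _ _ _ hj
            rcases Nat.lt_or_ge i (B k).length with hiL | hiL
            · -- old positions
              intro hdep
              refine hB5 k i hiL ?_
              refine (zetaDep_congr (w' := fun j => z ((B k ++ [t]).getD j 0))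
                (S := Finset.range i) ?_ ?_).mpr hdep
              · intro j hj
                show z ((B k).getD j 0) = z ((B k ++ [t]).getD j 0)
                rw [hgd j (lt_trans (Finset.mem_range.mp hj) hiL)]
              · rw [hgd i hiL]
            · -- the new position i = (B k).length
              have hieq : i = (B k).length := by omega
              subst hieq
              intro hdep
              have hidx : (B k ++ [t]).getD (B k).length 0 = t := by
                rw [List.getD_append_right _ _ _ _ le_rfl]; simp
              rw [hidx] at hdep
              refine hk0 ?_
              intro f hf hsum
              refine hdep f hf ?_
              show ∑ j ∈ Finset.range (B k).length,
                  (f (z ((B k ++ [t]).getD j 0)) - fstar (z ((B k ++ [t]).getD j 0))) ^ 2 ≤ ζ ^ 2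
              have e1 : ∑ j ∈ Finset.range (B k).length,
                  (f (z ((B k ++ [t]).getD j 0)) - fstar (z ((B k ++ [t]).getD j 0))) ^ 2
                  = ∑ j ∈ Finset.range (B k).length,
                  (f (z ((B k).getD j 0)) - fstar (z ((B k).getD j 0))) ^ 2 := by
                refine Finset.sum_congr rfl fun j hj => ?_
                rw [hgd j (Finset.mem_range.mp hj)]
              have e2 : ∑ j ∈ Finset.range (B k).length,
                  (f (z ((B k).getD j 0)) - fstar (z ((B k).getD j 0))) ^ 2
                  = ∑ a ∈ (B k).toFinset, (f (z a) - fstar (z a)) ^ 2 := by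
                rw [sum_range_getD_eq (B k) (fun a => (f (z a) - fstar (z a)) ^ 2),
                  List.sum_toFinset _ (hB2 k)]
              rw [e1, e2]
              exact hsum
          · rw [Function.update_of_ne hk] at hi ⊢
            exact hB5 k i hi
  -- conclude: total length τ is at most K * d ≤ τ - 1 < τ
  obtain ⟨B, hB1, hB2, hB3, hB4, hB5⟩ := main τ le_rfl
  have hbd : ∀ k : Fin K, (B k).length ≤ d := by
    intro k
    refine key (fun j => z ((B k).getD j 0)) (B k).length ?_
    intro i hi
    exact hB5 k i hi
  have : τ ≤ K * d := by
    calc τ = ∑ k : Fin K, (B k).length := hB4.symm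
    _ ≤ ∑ _k : Fin K, d := Finset.sum_le_sum fun k _ => hbd k
    _ = K * d := by simp [Finset.sum_const, Finset.card_univ, mul_comm]
  have hKd : K * d ≤ τ - 1 := Nat.div_mul_le_self (τ - 1) d
  omega
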